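/- Fix p ≠ 0. Let θ, a, b, c : ℝ → ℝ be differentiable functions satisfying θ'(t) = p, a'(t) = cos θ(t), b'(t) = sin θ(t), c'(t) = a(t) sin θ(t) for all t. Define ã(t) = a(t) − sin θ(t)/p, b̃(t) = b(t) − (1 − cos θ(t))/p, c̃(t) = c(t) + sin 2θ(t)/(4p²) + (1/p)(a(t) − sin θ(t)/p)(cos θ(t) − 1). Then for all t: θ'(t) = p, ã'(t) = 0, b̃'(t) = 0, and c̃'(t) = 1/(2p). -/

import Mathlib

open Real

theorem stmt19 (p : ℝ) (hp : p ≠ 0) (θ a b c : ℝ → ℝ)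
    (hθ : ∀ t, HasDerivAt θ p t)
    (ha : ∀ t, HasDerivAt a (Real.cos (θ t)) t)
    (hb : ∀ t, HasDerivAt b (Real.sin (θ t)) t)
    (hc : ∀ t, HasDerivAt c (a t * Real.sin (θ t)) t) :
    ∀ t : ℝ,
      HasDerivAt θ p t ∧
      HasDerivAt (fun s => a s - Real.sin (θ s) / p) 0 t ∧
      HasDerivAt (fun s => b s - (1 - Real.cos (θ s)) / p) 0 t ∧
      HasDerivAt (fun s => c s + Real.sin (2 * θ s) / (4 * p ^ 2)
        + 1 / p * (a s - Real.sin (θ s) / p) * (Real.cos (θ s) - 1)) (1 / (2 * p)) t := by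
  intro t
  have hsin : HasDerivAt (fun s => Real.sin (θ s)) (Real.cos (θ t) * p) t :=
    (Real.hasDerivAt_sin (θ t)).comp t (hθ t)
  have hcos : HasDerivAt (fun s => Real.cos (θ s)) (-Real.sin (θ t) * p) t :=
    (Real.hasDerivAt_cos (θ t)).comp t (hθ t)
  have hsin2 : HasDerivAt (fun s => Real.sin (2 * θ s)) (Real.cos (2 * θ t) * (2 * p)) t :=
    ((hθ t).const_mul 2).sin
  have hA : HasDerivAt (fun s => a s - Real.sin (θ s) / p)
      (Real.cos (θ t) - Real.cos (θ t) * p / p) t := (ha t).sub (hsin.div_const p)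
  refine ⟨hθ t, ?_, ?_, ?_⟩
  · convert hA using 1
    field_simp
    ring
  · have := (hb t).sub (((hasDerivAt_const t (1:ℝ)).sub hcos).div_const p)
    refine this.congr_deriv ?_
    simp [hp]
  · have hB : HasDerivAt (fun s => Real.cos (θ s) - 1) (-Real.sin (θ t) * p) t :=
      hcos.sub_const 1
    have hprod := (hA.const_mul (1/p)).mul hB
    have htot := ((hc t).add (hsin2.div_const (4 * p ^ 2))).add hprod
    refine htot.congr_deriv ?_
    symm
    rw [Real.cos_two_mul]
    have hs : Real.sin (θ t) ^ 2 = 1 - Real.cos (θ t) ^ 2 := Real.sin_sq (θ t)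
    field_simp
    linear_combination (-8) * hs
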